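/- For every complex number q with |q| < 1, the following identity holds: (1+q^3) · Σ_{m≥0} (−q^2; q^2)_m q^{2m} / (q; q^2)_m = q(q^4; q^4)_∞/(q; q)_∞ + 1 − q. -/

import Mathlib

open Filter Topology Finset

/-- The finite q-Pochhammer symbol `(a; q)_n = ∏_{j=0}^{n-1} (1 - a q^j)`. -/
noncomputable def qPoch (a q : ℂ) (n : ℕ) : ℂ := ∏ j ∈ Finset.range n, (1 - a * q ^ j)

/-- The infinite q-Pochhammer symbol `(a; q)_∞ = ∏_{j=0}^{∞} (1 - a q^j)`. -/
noncomputable def qPochInf (a q : ℂ) : ℂ := ∏' j : ℕ, (1 - a * q ^ j)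

/-- Basic analytic facts about the infinite q-Pochhammer product when `‖a‖ < 1`, `‖w‖ < 1`. -/
lemma qPochInf_hasProd {a w : ℂ} (ha : ‖a‖ < 1) (hw : ‖w‖ < 1) :
    HasProd (fun j : ℕ => 1 - a * w ^ j) (qPochInf a w) ∧ qPochInf a w ≠ 0 := by
  have hsmall : ∀ j : ℕ, ‖a * w ^ j‖ < 1 := by
    intro j
    calc ‖a * w ^ j‖ = ‖a‖ * ‖w‖ ^ j := by rw [norm_mul, norm_pow]
      _ ≤ ‖a‖ * 1 := by
          gcongr
          exact pow_le_one₀ (norm_nonneg w) hw.le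
      _ < 1 := by simpa using ha
  have hne : ∀ (x : Unit) (j : ℕ), (fun j (_ : Unit) => 1 - a * w ^ j) j x ≠ 0 := by
    intro _ j h
    have h1 : a * w ^ j = 1 := by linear_combination -h
    have := hsmall j
    rw [h1] at this
    simp at this
  have hlog : Summable (fun j : ℕ => Complex.log (1 - a * w ^ j)) := by
    have htend : Tendsto (fun j : ℕ => ‖a‖ * ‖w‖ ^ j) atTop (𝓝 (‖a‖ * 0)) :=
      (tendsto_pow_atTop_nhds_zero_of_lt_one (norm_nonneg w) hw).const_mul ‖a‖
    rw [mul_zero] at htend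
    have hev : ∀ᶠ j in atTop, ‖a‖ * ‖w‖ ^ j ≤ 1 / 2 :=
      htend.eventually_le_const (by norm_num)
    refine Summable.of_norm_bounded_eventually_nat (g := fun j => 3 / 2 * (‖a‖ * ‖w‖ ^ j)) ?_ ?_
    · exact ((summable_geometric_of_lt_one (norm_nonneg w) hw).mul_left ‖a‖).mul_left _
    · filter_upwards [hev] with j hj
      have h2 : ‖-(a * w ^ j)‖ ≤ 1 / 2 := by rwa [norm_neg, norm_mul, norm_pow]
      have h3 := Complex.norm_log_one_add_half_le_self h2
      rw [show (1 : ℂ) + -(a * w ^ j) = 1 - a * w ^ j by ring] at h3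
      calc ‖Complex.log (1 - a * w ^ j)‖ ≤ 3 / 2 * ‖-(a * w ^ j)‖ := h3
        _ = 3 / 2 * (‖a‖ * ‖w‖ ^ j) := by rw [norm_neg, norm_mul, norm_pow]
  have hmul : Multipliable (fun j : ℕ => 1 - a * w ^ j) :=
    Complex.multipliable_of_summable_log hlog
  refine ⟨hmul.hasProd, ?_⟩
  have := Complex.cexp_tsum_eq_tprod (fun j => hne () j) hlog
  rw [qPochInf, ← this]
  exact Complex.exp_ne_zero _

lemma qPoch_ne_zero {q : ℂ} (hq : ‖q‖ < 1) (N : ℕ) : qPoch q (q ^ 2) N ≠ 0 := by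
  rw [qPoch, Finset.prod_ne_zero_iff]
  intro j _ h
  have h1 : q * (q ^ 2) ^ j = 1 := by linear_combination -h
  have h2 : ‖q * (q ^ 2) ^ j‖ < 1 := by
    calc ‖q * (q ^ 2) ^ j‖ = ‖q‖ * (‖q‖ ^ 2) ^ j := by
          rw [norm_mul, norm_pow, norm_pow]
      _ ≤ ‖q‖ * 1 := by
          gcongr
          exact pow_le_one₀ (by positivity) (by nlinarith [norm_nonneg q])
      _ < 1 := by simpa using hq
  rw [h1] at h2
  simp at h2

/-- Telescoping identity for the partial sums. -/
lemma key_partial (q : ℂ) (hq : ‖q‖ < 1) (N : ℕ) :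
    (1 + q ^ 3) * ∑ m ∈ Finset.range N, qPoch (-q ^ 2) (q ^ 2) m * q ^ (2 * m) / qPoch q (q ^ 2) m
      = (1 - q) + (q - q ^ (2 * N)) * qPoch (-q ^ 2) (q ^ 2) N / qPoch q (q ^ 2) N := by
  induction N with
  | zero => simp [qPoch]
  | succ n ih =>
    have hD : qPoch q (q ^ 2) n ≠ 0 := qPoch_ne_zero hq n
    have hD' : qPoch q (q ^ 2) (n + 1) ≠ 0 := qPoch_ne_zero hq (n + 1)
    have hE : qPoch (-q ^ 2) (q ^ 2) (n + 1)
        = qPoch (-q ^ 2) (q ^ 2) n * (1 - -q ^ 2 * (q ^ 2) ^ n) := Finset.prod_range_succ _ _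
    have hDs : qPoch q (q ^ 2) (n + 1)
        = qPoch q (q ^ 2) n * (1 - q * (q ^ 2) ^ n) := Finset.prod_range_succ _ _
    have h1 : (1 : ℂ) - q * (q ^ 2) ^ n ≠ 0 := by
      intro h
      apply hD'
      rw [hDs, h, mul_zero]
    rw [Finset.sum_range_succ, mul_add, ih, hE, hDs]
    have hp1 : q ^ (2 * (n + 1)) = q ^ (2 * n) * q ^ 2 := by ring
    have hp2 : (q ^ 2) ^ n = q ^ (2 * n) := by rw [← pow_mul]
    rw [hp1, hp2]
    have key : ∀ E D x : ℂ, D ≠ 0 → 1 - q * x ≠ 0 →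
        1 - q + (q - x) * E / D + (1 + q ^ 3) * (E * x / D)
          = 1 - q + (q - x * q ^ 2) * (E * (1 - -q ^ 2 * x)) / (D * (1 - q * x)) := by
      intro E D x hD0 hx0
      field_simp
      ring
    rw [hp2] at h1
    exact key _ _ _ hD h1

theorem stmt_16 (q : ℂ) (hq : ‖q‖ < 1) :
    (1 + q ^ 3) * ∑' m : ℕ, qPoch (-q ^ 2) (q ^ 2) m * q ^ (2 * m) / qPoch q (q ^ 2) m =
      q * qPochInf (q ^ 4) (q ^ 4) / qPochInf q q + 1 - q := by
  have hq' : ‖q‖ < 1 := by exact hq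
  have hq2 : ‖q ^ 2‖ < 1 := by
    rw [norm_pow]; exact pow_lt_one₀ (norm_nonneg q) hq' two_ne_zero
  have hq2' : ‖-q ^ 2‖ < 1 := by rwa [norm_neg]
  have hq4 : ‖q ^ 4‖ < 1 := by
    rw [norm_pow]; exact pow_lt_one₀ (norm_nonneg q) hq' four_ne_zero
  obtain ⟨hAprod, hAne⟩ := qPochInf_hasProd hq2' hq2
  obtain ⟨hBprod, hBne⟩ := qPochInf_hasProd hq' hq2
  obtain ⟨hCprod, hCne⟩ := qPochInf_hasProd hq2 hq2
  obtain ⟨hFprod, hFne⟩ := qPochInf_hasProd hq4 hq4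
  obtain ⟨hGprod, hGne⟩ := qPochInf_hasProd hq' hq'
  set A := qPochInf (-q ^ 2) (q ^ 2) with hA
  set B := qPochInf q (q ^ 2) with hB
  set C := qPochInf (q ^ 2) (q ^ 2) with hC
  -- (q^4;q^4)_inf = A * C
  have hFeq : qPochInf (q ^ 4) (q ^ 4) = A * C := by
    refine hFprod.unique ?_
    have hfun : (fun j : ℕ => 1 - q ^ 4 * (q ^ 4) ^ j)
        = fun j : ℕ => (1 - -q ^ 2 * (q ^ 2) ^ j) * (1 - q ^ 2 * (q ^ 2) ^ j) := by
      funext j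
      have hp : ((q : ℂ) ^ 4) ^ j = (q ^ 2) ^ j * (q ^ 2) ^ j := by
        rw [← mul_pow]; congr 1; ring
      rw [hp]; ring
    rw [hfun]
    exact hAprod.mul hCprod
  -- (q;q)_inf = B * C
  have hGeq : qPochInf q q = B * C := by
    refine hGprod.unique ?_
    have heven : HasProd (fun k : ℕ => 1 - q * q ^ (2 * k)) B :=
      hBprod.congr_fun (fun k => by rw [pow_mul])
    have hodd : HasProd (fun k : ℕ => 1 - q * q ^ (2 * k + 1)) C :=
      hCprod.congr_fun (fun k => by rw [pow_succ, pow_mul]; ring)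
    exact HasProd.even_mul_odd (f := fun j : ℕ => 1 - q * q ^ j) heven hodd
  -- the summand
  set t : ℕ → ℂ := fun m => qPoch (-q ^ 2) (q ^ 2) m * q ^ (2 * m) / qPoch q (q ^ 2) m with ht
  have hone : (1 : ℂ) + q ^ 3 ≠ 0 := by
    intro h
    have h3 : (q : ℂ) ^ 3 = -1 := by linear_combination h
    have : ‖(q : ℂ) ^ 3‖ = 1 := by rw [h3]; simp
    rw [norm_pow] at this
    have h4 : ‖q‖ ^ 3 < 1 := pow_lt_one₀ (norm_nonneg q) hq' three_ne_zero
    linarith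
  have hden : ∀ m : ℕ, (1 : ℂ) - q * (q ^ 2) ^ m ≠ 0 := by
    intro m h
    apply qPoch_ne_zero hq' (m + 1)
    rw [qPoch, Finset.prod_range_succ, h, mul_zero]
  -- ratio formula
  have hrat : ∀ m : ℕ,
      t (m + 1) = t m * ((1 - -q ^ 2 * (q ^ 2) ^ m) * q ^ 2 / (1 - q * (q ^ 2) ^ m)) := by
    intro m
    have hD := qPoch_ne_zero hq' m
    have h1 := hden m
    show qPoch (-q ^ 2) (q ^ 2) (m + 1) * q ^ (2 * (m + 1)) / qPoch q (q ^ 2) (m + 1) = _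
    rw [show qPoch (-q ^ 2) (q ^ 2) (m + 1)
          = qPoch (-q ^ 2) (q ^ 2) m * (1 - -q ^ 2 * (q ^ 2) ^ m) from Finset.prod_range_succ _ _,
        show qPoch q (q ^ 2) (m + 1)
          = qPoch q (q ^ 2) m * (1 - q * (q ^ 2) ^ m) from Finset.prod_range_succ _ _,
        show q ^ (2 * (m + 1)) = q ^ (2 * m) * q ^ 2 from by ring]
    have gen : ∀ E D x y : ℂ, D ≠ 0 → 1 - q * x ≠ 0 →
        E * (1 - -q ^ 2 * x) * (y * q ^ 2) / (D * (1 - q * x))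
          = E * y / D * ((1 - -q ^ 2 * x) * q ^ 2 / (1 - q * x)) := by
      intro E D x y hD0 hx0
      field_simp
    exact gen _ _ _ _ hD h1
  -- summability via ratio test
  have hpow0 : Tendsto (fun m : ℕ => ((q : ℂ) ^ 2) ^ m) atTop (𝓝 0) :=
    tendsto_pow_atTop_nhds_zero_of_norm_lt_one hq2
  have hratio_tend : Tendsto
      (fun m : ℕ => (1 - -q ^ 2 * (q ^ 2) ^ m) * q ^ 2 / (1 - q * (q ^ 2) ^ m)) atTop
      (𝓝 (q ^ 2)) := by
    have hnum : Tendsto (fun m : ℕ => (1 - -q ^ 2 * (q ^ 2) ^ m) * q ^ 2) atTop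
        (𝓝 ((1 - -q ^ 2 * 0) * q ^ 2)) :=
      (tendsto_const_nhds.sub (hpow0.const_mul _)).mul_const _
    have hd : Tendsto (fun m : ℕ => (1 : ℂ) - q * (q ^ 2) ^ m) atTop (𝓝 (1 - q * 0)) :=
      tendsto_const_nhds.sub (hpow0.const_mul _)
    have := hnum.div hd (by norm_num)
    simpa only [Pi.div_def, mul_zero, sub_zero, one_mul, div_one] using this
  have hrlt : ‖(q : ℂ) ^ 2‖ < (1 + ‖q‖ ^ 2) / 2 := by
    rw [norm_pow]; nlinarith [norm_nonneg q]
  have hr1 : (1 + ‖q‖ ^ 2) / 2 < 1 := by nlinarith [norm_nonneg q]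
  have hev : ∀ᶠ m in atTop,
      ‖(1 - -q ^ 2 * (q ^ 2) ^ m) * q ^ 2 / (1 - q * (q ^ 2) ^ m)‖ ≤ (1 + ‖q‖ ^ 2) / 2 :=
    hratio_tend.norm.eventually_le_const hrlt
  have hsum : Summable t := by
    refine summable_of_ratio_norm_eventually_le hr1 ?_
    filter_upwards [hev] with m hm
    rw [hrat m, norm_mul, mul_comm]
    exact mul_le_mul_of_nonneg_right hm (norm_nonneg _)
  -- limit of partial sums
  have hq2N : Tendsto (fun N : ℕ => (q : ℂ) ^ (2 * N)) atTop (𝓝 0) := by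
    simpa [pow_mul] using hpow0
  have hEtend : Tendsto (fun N : ℕ => qPoch (-q ^ 2) (q ^ 2) N) atTop (𝓝 A) :=
    hAprod.tendsto_prod_nat
  have hDtend : Tendsto (fun N : ℕ => qPoch q (q ^ 2) N) atTop (𝓝 B) :=
    hBprod.tendsto_prod_nat
  have hc : Tendsto
      (fun N : ℕ => (1 - q + (q - q ^ (2 * N)) * qPoch (-q ^ 2) (q ^ 2) N / qPoch q (q ^ 2) N)
          / (1 + q ^ 3)) atTop (𝓝 ((1 - q + (q - 0) * A / B) / (1 + q ^ 3))) := by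
    exact (tendsto_const_nhds.add
      (((tendsto_const_nhds.sub hq2N).mul hEtend).div hDtend hBne)).div_const _
  have hps : ∀ N : ℕ, ∑ m ∈ Finset.range N, t m
      = (1 - q + (q - q ^ (2 * N)) * qPoch (-q ^ 2) (q ^ 2) N / qPoch q (q ^ 2) N)
          / (1 + q ^ 3) := by
    intro N
    rw [eq_div_iff hone]
    linear_combination key_partial q hq' N
  have hhs : HasSum t ((1 - q + (q - 0) * A / B) / (1 + q ^ 3)) := by
    rw [hsum.hasSum_iff_tendsto_nat]
    exact hc.congr (fun N => (hps N).symm)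
  rw [hhs.tsum_eq, hFeq, hGeq]
  rw [sub_zero]
  field_simp
  ring
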